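/- Fix a prime p. Let R ⊆ S be a finite extension of F-finite noetherian commutative domains of characteristic p, and let T : S → R be an R-linear map such that σ is injective and a generic isomorphism. Let 𝔭 ⊊ R be a prime ideal with √(𝔭S) = { s ∈ S : T(s·x) ∈ 𝔭 for all x ∈ S }, let C be a Cartier subalgebra of C_R such that every φ ∈ C_e has a chosen T-transpose φ^⊤ and such that φ(𝔭) ⊆ 𝔭 for all e ≥ 1 and φ ∈ C_e. Then there exist e ≥ 1 and φ ∈ C_e with φ(R) ⊄ 𝔭 if and only if there exist e ≥ 1, ψ ∈ (f*C)_e and a prime ideal 𝔮 of S with 𝔮 ∩ R = 𝔭 such that ψ(S) ⊄ 𝔮. -/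

import Mathlib

/-- `p^e`-semilinear additive maps ("Cartier maps"):
`φ (a^{p^e} • x) = a • φ x`. -/
def IsCartierMap (p : ℕ) (A : Type*) [CommSemiring A] {X Y : Type*} [AddCommMonoid X]
    [AddCommMonoid Y] [Module A X] [Module A Y] (e : ℕ) (φ : X →+ Y) : Prop :=
  ∀ (a : A) (x : X), φ (a ^ p ^ e • x) = a • φ x

/-- A Cartier structure (Cartier subalgebra of `C_X`) on an `A`-module `X`. -/
structure CartierStructure (p : ℕ) (A : Type*) [CommRing A] (X : Type*) [AddCommGroup X]
    [Module A X] where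
  carrier : ℕ → Set (X →+ X)
  cartier_mem : ∀ e, 1 ≤ e → ∀ φ ∈ carrier e, IsCartierMap p A e φ
  add_mem : ∀ e, 1 ≤ e → ∀ φ ∈ carrier e, ∀ ψ ∈ carrier e, φ + ψ ∈ carrier e
  smul_mem : ∀ e, 1 ≤ e → ∀ (a : A), ∀ φ ∈ carrier e,
    (DistribMulAction.toAddMonoidHom X a).comp φ ∈ carrier e
  mul_mem : ∀ e, 1 ≤ e → ∀ (a : A), ∀ φ ∈ carrier e,
    φ.comp (DistribMulAction.toAddMonoidHom X a) ∈ carrier e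
  comp_mem : ∀ e d, 1 ≤ e → 1 ≤ d → ∀ φ ∈ carrier e, ∀ ψ ∈ carrier d,
    φ.comp ψ ∈ carrier (e + d)

/-- The `S`-linear map `σ : S → Hom_R(S,R)`, `σ(s)(x) = T(s·x)`, as an `R`-bilinear map. -/
noncomputable def sigmaT (R S : Type*) [CommRing R] [CommRing S] [Algebra R S]
    (T : S →ₗ[R] R) : S →ₗ[R] (S →ₗ[R] R) :=
  LinearMap.mk₂ R (fun s x => T (s * x))
    (fun s s' x => by show T ((s + s') * x) = T (s * x) + T (s' * x); rw [add_mul, map_add])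
    (fun r s x => by show T ((r • s) * x) = r • T (s * x); rw [smul_mul_assoc, map_smul])
    (fun s x x' => by show T (s * (x + x')) = T (s * x) + T (s * x'); rw [mul_add, map_add])
    (fun r s x => by show T (s * (r • x)) = r • T (s * x); rw [mul_smul_comm, map_smul])

/-- `ψ` is a `T`-transpose of `φ`: `T (ψ s * s') = φ (T (s * s'^{p^e}))`. -/
def IsTranspose (p : ℕ) {R S : Type*} [CommRing R] [CommRing S] [Algebra R S]
    (T : S →ₗ[R] R) (e : ℕ) (φ : R →+ R) (ψ : S →+ S) : Prop :=
  ∀ s s' : S, T (ψ s * s') = φ (T (s * s' ^ p ^ e))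

/-- The degree-`e` part of the pulled back Cartier algebra `f^*C`:
finite sums `Σ φᵢ^⊤ · sᵢ` where `(χ · s) x = χ (s * x)`. -/
def pushFam {R S : Type*} [CommRing R] [CommRing S] (D : ℕ → Set (R →+ R))
    (tr : ℕ → (R →+ R) → (S →+ S)) : ℕ → Set (S →+ S) := fun e =>
  { ψ | ∃ (k : ℕ) (φ : Fin k → R →+ R) (s : Fin k → S), (∀ i, φ i ∈ D e) ∧
      ψ = ∑ i, (tr e (φ i)).comp (AddMonoidHom.mulLeft (s i)) }

/-- Type synonym for a ring viewed as a module over itself via Frobenius. -/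
def FrobMod (A : Type*) := A

instance {A : Type*} [AddCommGroup A] : AddCommGroup (FrobMod A) := ‹AddCommGroup A›

/-- The module structure of `A` on `FrobMod A = A` via the Frobenius `a ↦ a^p`;
`A` is `F`-finite iff `FrobMod A` is a finite module, and `[A^{1/p} : A]` is its rank. -/
noncomputable def frobModule (p : ℕ) (hp : p.Prime) (A : Type*) [CommRing A] [CharP A p] :
    Module A (FrobMod A) :=
  haveI : ExpChar A p := .prime hp
  Module.compHom A (frobenius A p)

/-- If `q` is a minimal prime over `I` and `r ∈ q`, then some multiple of some power of `r`
by an element outside `q` lies in `I`. -/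
lemma exists_mul_pow_mem_of_mem_minimalPrimes {A : Type*} [CommRing A] {I q : Ideal A}
    (hq : q ∈ I.minimalPrimes) {r : A} (hr : r ∈ q) :
    ∃ (n : ℕ) (s : A), s ∉ q ∧ s * r ^ n ∈ I := by
  rw [Ideal.minimalPrimes_eq_comap] at hq
  obtain ⟨q', hq', rfl⟩ := hq
  haveI hq'p : q'.IsPrime := by
    rw [minimalPrimes_eq_minimals] at hq'; exact hq'.1
  have hrq' : Ideal.Quotient.mk I r ∈ q' := hr
  have hnil : IsNilpotent (algebraMap _ (Localization q'.primeCompl)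
      (Ideal.Quotient.mk I r)) := by
    have h := IsLocalization.AtPrime.radical_map_of_mem_minimalPrimes
      (A := Localization q'.primeCompl) q' ⊥ hq'
    rw [Ideal.map_bot] at h
    have hm : algebraMap _ (Localization q'.primeCompl) (Ideal.Quotient.mk I r) ∈
        (⊥ : Ideal (Localization q'.primeCompl)).radical := h ▸ Ideal.mem_map_of_mem _ hrq'
    obtain ⟨n, hn⟩ := hm
    exact ⟨n, by simpa using hn⟩
  obtain ⟨n, hn⟩ := hnil
  rw [← map_pow, IsLocalization.map_eq_zero_iff q'.primeCompl] at hn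
  obtain ⟨⟨s', hs'⟩, hs⟩ := hn
  obtain ⟨s, rfl⟩ := Ideal.Quotient.mk_surjective s'
  refine ⟨n, s, hs', ?_⟩
  apply Ideal.Quotient.eq_zero_iff_mem.mp
  rw [map_mul, map_pow]
  exact hs

/-- **Transformation rule for non-degeneracy along a center of F-purity:** `(R,C)` is
non-degenerate with respect to `𝔭` iff `(S, f^*C)` is non-degenerate with respect to at
least one prime `𝔮` lying over `𝔭`. -/
theorem nondegenerate_iff_exists_prime_over
    (p : ℕ) (hp : p.Prime) (R S : Type*) [CommRing R] [CommRing S]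
    [IsDomain R] [IsDomain S] [IsNoetherianRing R] [IsNoetherianRing S]
    [CharP R p] [CharP S p] [Algebra R S] [Module.Finite R S]
    (hinj : Function.Injective (algebraMap R S))
    (hFfR : letI := frobModule p hp R; Module.Finite R (FrobMod R))
    (hFfS : letI := frobModule p hp S; Module.Finite S (FrobMod S))
    (T : S →ₗ[R] R)
    (hσinj : Function.Injective ⇑(sigmaT R S T))
    (K : Type*) [Field K] [Algebra R K] [IsFractionRing R K]
    (hσgen : Function.Bijective ⇑(LinearMap.baseChange K (sigmaT R S T)))
    (𝔭 : Ideal R) (h𝔭 : 𝔭.IsPrime)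
    (hrad : ((Ideal.map (algebraMap R S) 𝔭).radical : Set S) =
      { s : S | ∀ x : S, T (s * x) ∈ 𝔭 })
    (C : CartierStructure p R R) (tr : ℕ → (R →+ R) → (S →+ S))
    (htr : ∀ e, 1 ≤ e → ∀ φ ∈ C.carrier e,
      IsCartierMap p S e (tr e φ) ∧ IsTranspose p T e φ (tr e φ))
    (hcompat : ∀ e, 1 ≤ e → ∀ φ ∈ C.carrier e, ∀ a ∈ 𝔭, φ a ∈ 𝔭) :
    (∃ e, 1 ≤ e ∧ ∃ φ ∈ C.carrier e, ∃ r : R, φ r ∉ 𝔭) ↔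
      (∃ e, 1 ≤ e ∧ ∃ ψ ∈ pushFam C.carrier tr e, ∃ 𝔮 : Ideal S, 𝔮.IsPrime ∧
        𝔮.comap (algebraMap R S) = 𝔭 ∧ ∃ s : S, ψ s ∉ 𝔮) := by
  haveI := h𝔭
  have hint : Algebra.IsIntegral R S := Algebra.IsIntegral.of_finite R S
  set f := algebraMap R S with hf
  set 𝔭S := Ideal.map f 𝔭 with h𝔭S
  have hradmem : ∀ z : S, z ∈ 𝔭S.radical ↔ ∀ x : S, T (z * x) ∈ 𝔭 := by
    intro z
    have := Set.ext_iff.mp hrad z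
    simpa only [SetLike.mem_coe, Set.mem_setOf_eq] using this
  have h𝔭Sne : 𝔭S ≠ ⊤ := by
    obtain ⟨Q, hQge, hQp, hQc⟩ := Ideal.exists_ideal_over_prime_of_isIntegral 𝔭 ⊥ (by
      intro x hx
      have hx0 : f x = 0 := by simpa using hx
      have : x = 0 := hinj (by simpa using hx0)
      simp [this])
    intro htop
    have h1 : 𝔭S ≤ Q := Ideal.map_le_iff_le_comap.mpr (le_of_eq hQc.symm)
    exact hQp.ne_top (top_le_iff.mp (htop ▸ h1))
  have hu : ∃ u : S, T u ∉ 𝔭 := by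
    by_contra hcon
    push_neg at hcon
    have : 𝔭S.radical = ⊤ := by
      rw [Ideal.eq_top_iff_one, hradmem]
      intro x; exact hcon _
    rw [Ideal.radical_eq_top] at this
    exact h𝔭Sne this
  have hcomap : ∀ 𝔮 : Ideal S, 𝔮 ∈ 𝔭S.minimalPrimes → 𝔮.comap f = 𝔭 := by
    intro 𝔮 h𝔮
    haveI h𝔮p : 𝔮.IsPrime := h𝔮.1.1
    have h𝔭S𝔮 : 𝔭S ≤ 𝔮 := h𝔮.1.2
    apply le_antisymm
    · intro r₀ hr₀
      obtain ⟨n, s, hs𝔮, hsr⟩ :=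
        exists_mul_pow_mem_of_mem_minimalPrimes h𝔮 (Ideal.mem_comap.mp hr₀)
      have hs_rad : s ∉ 𝔭S.radical := fun h =>
        hs𝔮 (h𝔮p.radical ▸ Ideal.radical_mono h𝔭S𝔮 h)
      obtain ⟨x₀, hx₀⟩ : ∃ x, T (s * x) ∉ 𝔭 := by
        by_contra hcon; push_neg at hcon; exact hs_rad ((hradmem s).mpr hcon)
      have h1 : T (s * f r₀ ^ n * x₀) ∈ 𝔭 :=
        (hradmem _).mp (Ideal.le_radical hsr) x₀
      have h2 : s * f r₀ ^ n * x₀ = (r₀ ^ n) • (s * x₀) := by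
        rw [Algebra.smul_def, map_pow]; ring
      rw [h2, map_smul, smul_eq_mul] at h1
      rcases h𝔭.mem_or_mem h1 with h | h
      · exact h𝔭.mem_of_pow_mem n h
      · exact absurd h hx₀
    · intro r₀ hr₀
      exact Ideal.mem_comap.mpr (h𝔭S𝔮 (Ideal.mem_map_of_mem f hr₀))
  constructor
  · rintro ⟨e, he, φ, hφ, r, hr⟩
    obtain ⟨u, hu⟩ := hu
    set t := T u with ht
    have hpe : 1 ≤ p ^ e := Nat.one_le_pow _ _ hp.pos
    set a := r * t ^ (p ^ e - 1) with ha
    set χ := φ.comp (DistribMulAction.toAddMonoidHom R a) with hχ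
    have hχmem : χ ∈ C.carrier e := C.mul_mem e he a φ hφ
    have hχt : χ t ∉ 𝔭 := by
      have h1 : χ t = φ (t ^ p ^ e • r) := by
        show φ (a • t) = _
        congr 1
        rw [smul_eq_mul, smul_eq_mul, ha, mul_comm (t ^ p ^ e) r, mul_assoc, ← pow_succ,
          Nat.sub_add_cancel hpe]
      rw [h1, C.cartier_mem e he φ hφ t r, smul_eq_mul]
      intro hmem
      rcases h𝔭.mem_or_mem hmem with h | h
      · exact hu h
      · exact hr h
    set ψ := (tr e χ).comp (AddMonoidHom.mulLeft (1 : S)) with hψ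
    have hψmem : ψ ∈ pushFam C.carrier tr e :=
      ⟨1, fun _ => χ, fun _ => 1, fun _ => hχmem, by rw [Fin.sum_univ_one]⟩
    have hval : T (tr e χ u * 1) = χ t := by
      rw [(htr e he χ hχmem).2 u 1, one_pow, mul_one]
    have hnotrad : tr e χ u ∉ 𝔭S.radical := by
      intro h
      have := (hradmem _).mp h 1
      rw [hval] at this
      exact hχt this
    obtain ⟨J, ⟨hJle, hJp⟩, hJnot⟩ : ∃ J, (𝔭S ≤ J ∧ J.IsPrime) ∧ tr e χ u ∉ J := by
      by_contra hcon
      push_neg at hcon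
      apply hnotrad
      rw [Ideal.radical_eq_sInf]
      exact Submodule.mem_sInf.mpr fun J hJ => hcon J hJ
    haveI := hJp
    obtain ⟨𝔮, h𝔮min, h𝔮J⟩ := Ideal.exists_minimalPrimes_le hJle
    haveI h𝔮p : 𝔮.IsPrime := h𝔮min.1.1
    refine ⟨e, he, ψ, hψmem, 𝔮, h𝔮p, hcomap 𝔮 h𝔮min, u, ?_⟩
    have hψu : ψ u = tr e χ u := by
      show tr e χ (1 * u) = _
      rw [one_mul]
    rw [hψu]
    exact fun h => hJnot (h𝔮J h)
  · rintro ⟨e, he, ψ, ⟨k, φs, ss, hφs, rfl⟩, 𝔮, h𝔮p, h𝔮c, s, hs⟩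
    have h𝔭S𝔮 : 𝔭S ≤ 𝔮 := Ideal.map_le_iff_le_comap.mpr (le_of_eq h𝔮c.symm)
    have hnotrad : (∑ i, (tr e (φs i)).comp (AddMonoidHom.mulLeft (ss i))) s ∉ 𝔭S.radical :=
      fun h => hs (h𝔮p.radical ▸ Ideal.radical_mono h𝔭S𝔮 h)
    obtain ⟨x, hx⟩ :
        ∃ x, T ((∑ i, (tr e (φs i)).comp (AddMonoidHom.mulLeft (ss i))) s * x) ∉ 𝔭 := by
      by_contra hcon; push_neg at hcon; exact hnotrad ((hradmem _).mpr hcon)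
    have hsum : T ((∑ i, (tr e (φs i)).comp (AddMonoidHom.mulLeft (ss i))) s * x)
        = ∑ i, (φs i) (T (ss i * s * x ^ p ^ e)) := by
      rw [AddMonoidHom.finset_sum_apply, Finset.sum_mul, map_sum]
      exact Finset.sum_congr rfl fun i _ => (htr e he (φs i) (hφs i)).2 (ss i * s) x
    rw [hsum] at hx
    obtain ⟨i, _, hi⟩ : ∃ i ∈ Finset.univ, (φs i) (T (ss i * s * x ^ p ^ e)) ∉ 𝔭 := by
      by_contra hcon; push_neg at hcon
      exact hx (Ideal.sum_mem _ fun i hi => hcon i hi)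
    exact ⟨e, he, φs i, hφs i, _, hi⟩
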